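/- arXiv:2505.06728 — 4 statements merged into one kernel-verified Lean document; each statement's English description precedes it below -/
import Mathlib

section
/- The exponent (twiddle) matrix satisfies W^n_m = L^n_m · W^n_k · L^n_k, where n = k·m. -/
open Matrix Complex

/-- The primitive `n`-th root of unity `ω_n = exp(-2πi/n)`. -/
noncomputable def tw (n : ℕ) : ℂ := Complex.exp (-(2 * Real.pi * Complex.I) / n)

/-- The `n × n` DFT matrix `F_n = [ω_n^{kl}]`. -/
noncomputable def DFT (n : ℕ) : Matrix (Fin n) (Fin n) ℂ :=
  fun r c => tw n ^ (r.val * c.val)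

/-- The stride permutation `L^n_k` (with `n = k*m`), sending the basis vector
`e_{i,k} ⊗ e_{j,m}` (flat index `i*m+j`) to `e_{j,m} ⊗ e_{i,k}` (flat index `j*k+i`). -/
noncomputable def Lmat (n k m : ℕ) : Matrix (Fin n) (Fin n) ℂ :=
  fun r c => if r.val = (c.val % m) * k + c.val / m then 1 else 0

/-- The diagonal twiddle matrix `W^n_m` (with `n = k*m`), acting on
`e_{i,k} ⊗ e_{j,m}` (flat index `c = i*m+j`) by the scalar `ω_n^{ij}`. -/
noncomputable def Wmat (n m : ℕ) : Matrix (Fin n) (Fin n) ℂ :=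
  fun r c => if r = c then tw n ^ ((c.val / m) * (c.val % m)) else 0

/-- Entry of a `k × k` matrix at natural-number indices (0 outside range). -/
noncomputable def ment {k : ℕ} (A : Matrix (Fin k) (Fin k) ℂ) (i j : ℕ) : ℂ :=
  if h : i < k ∧ j < k then A ⟨i, h.1⟩ ⟨j, h.2⟩ else 0

/-- Kronecker product `A ⊗ B` of a `k×k` and an `m×m` matrix, written on flat
indices of size `n = k*m` (row-major: index `i*m+j ↔ e_{i,k} ⊗ e_{j,m}`). -/
noncomputable def kron (n k m : ℕ) (A : Matrix (Fin k) (Fin k) ℂ)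
    (B : Matrix (Fin m) (Fin m) ℂ) : Matrix (Fin n) (Fin n) ℂ :=
  fun r c => ment A (r.val / m) (c.val / m) * ment B (r.val % m) (c.val % m)

/-- Value of a digit list `[d_0, d_1, …]` in the mixed-radix system with radices
`[c_0, c_1, …]` (least-significant first): `d_0 + c_0*(d_1 + c_1*(…))`. -/
def mval : List ℕ → List ℕ → ℕ
  | c :: cs, d :: ds => d + c * mval cs ds
  | _, _ => 0

/-- Digits (least-significant first) of `x` in the mixed-radix system with
radices `[c_0, c_1, …]` (least-significant first). -/
def mdig : List ℕ → ℕ → List ℕ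
  | [], _ => []
  | c :: cs, x => x % c :: mdig cs (x / c)

/-- The digit-reversal permutation `P_α` of a multi-index `α = (n_K, …, n_0)`,
where `a = [n_0, …, n_K]` lists the radices of the system generated by `α`
least-significant first: `x` is decomposed in the system generated by
`α* = (n_0, …, n_K)` and re-read with reversed digits in the system of `α`. -/
def mrev (a : List ℕ) (x : ℕ) : ℕ := mval a ((mdig a.reverse x).reverse)

/-- The digit-reversal permutation matrix `S_α`, `S_α e_x = e_{P_α x}`;
`a = [n_0, …, n_K]` lists `α = (n_K, …, n_0)` least-significant first. -/
noncomputable def Smat (n : ℕ) (a : List ℕ) : Matrix (Fin n) (Fin n) ℂ :=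
  fun r c => if r.val = mrev a c.val then 1 else 0

/-- The diagonal matrix `V_{k,m,n}` of size `N = k*m*n`, acting on
`e_{i,k} ⊗ e_{j,m} ⊗ e_{ℓ,n}` (flat index `i*(m*n) + j*n + ℓ`) by
`ω_{kmn}^{i(ℓ m + j)}`. -/
noncomputable def Vmat (N k m n : ℕ) : Matrix (Fin N) (Fin N) ℂ :=
  fun r c => if r = c then
    tw (k * m * n) ^ ((c.val / (m * n)) * ((c.val % n) * m + (c.val / n) % m)) else 0

/-- `W^n_m = L^n_m · W^n_k · L^n_k` for `n = k·m`. -/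
theorem twiddle_conj (k m n : ℕ) (hk : 0 < k) (hm : 0 < m) (hn : n = k * m) :
    Wmat n m = Lmat n m k * Wmat n k * Lmat n k m := by
  subst hn
  ext r c
  have hcd : (c : ℕ) / m < k := Nat.div_lt_of_lt_mul (lt_of_lt_of_eq c.isLt (mul_comm k m))
  have hq0 : (c : ℕ) % m * k + (c : ℕ) / m < k * m := by
    calc (c : ℕ) % m * k + (c : ℕ) / m < (c : ℕ) % m * k + k := by omega
    _ = ((c : ℕ) % m + 1) * k := by ring
    _ ≤ m * k := Nat.mul_le_mul_right k (Nat.mod_lt _ hm)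
    _ = k * m := mul_comm m k
  set q0 : Fin (k * m) := ⟨(c : ℕ) % m * k + (c : ℕ) / m, hq0⟩ with hq0def
  have hmod : (q0 : ℕ) % k = (c : ℕ) / m := by
    simp [hq0def, Nat.mul_add_mod', Nat.mod_eq_of_lt hcd]
  have hdiv : (q0 : ℕ) / k = (c : ℕ) % m := by
    simp only [hq0def]
    rw [add_comm, Nat.add_mul_div_right _ _ hk, Nat.div_eq_of_lt hcd, Nat.zero_add]
  rw [Matrix.mul_apply]
  rw [Finset.sum_eq_single q0]
  · rw [Matrix.mul_apply, Finset.sum_eq_single q0]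
    · simp only [Lmat, Wmat, hmod, hdiv]
      have hc : (c : ℕ) / m * m + (c : ℕ) % m = c := by rw [mul_comm]; exact Nat.div_add_mod _ _
      have : ((r : ℕ) = (c : ℕ) / m * m + (c : ℕ) % m) ↔ r = c := by
        rw [hc, Fin.val_eq_val]
      simp only [if_true]
      by_cases h : r = c
      · simp [h, this, hc, hq0def, mul_comm ((c:ℕ)/m) ((c:ℕ)%m)]
      · simp [h, this]
    · intro b _ hb
      simp only [Wmat]
      rw [if_neg hb, mul_zero]
    · intro h; exact absurd (Finset.mem_univ q0) h
  · intro b _ hb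
    have : ¬ ((b : ℕ) = (c : ℕ) % m * k + (c : ℕ) / m) := by
      intro h; exact hb (Fin.ext h)
    simp only [Lmat]
    rw [if_neg this, mul_zero]
  · intro h; exact absurd (Finset.mem_univ q0) h
end

section
/- Cooley–Tukey splitting rule: for n = k·m, the DFT matrix factors as F_n = L^n_k (I_k ⊗ F_m) W^n_m (F_k ⊗ I_m). -/
open Matrix Complex

lemma tw_pow_self {n : ℕ} (hn : 0 < n) : tw n ^ n = 1 := by
  have hn' : (n:ℂ) ≠ 0 := Nat.cast_ne_zero.2 hn.ne'
  rw [tw, ← Complex.exp_nat_mul]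
  rw [show (n:ℂ) * (-(2 * Real.pi * Complex.I) / n) = (-1 : ℤ) * (2 * Real.pi * Complex.I) by
    push_cast; field_simp]
  exact Complex.exp_int_mul_two_pi_mul_I (-1)

lemma tw_pow_left (k m : ℕ) (hk : 0 < k) (hm : 0 < m) : tw (k*m) ^ k = tw m := by
  have hk' : (k:ℂ) ≠ 0 := Nat.cast_ne_zero.2 hk.ne'
  have hm' : (m:ℂ) ≠ 0 := Nat.cast_ne_zero.2 hm.ne'
  rw [tw, tw, ← Complex.exp_nat_mul]
  congr 1
  push_cast
  field_simp

/-- Cooley–Tukey splitting rule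
`F_n = L^n_k (I_k ⊗ F_m) W^n_m (F_k ⊗ I_m)` for `n = k·m`. -/
theorem dft_split (k m n : ℕ) (hk : 0 < k) (hm : 0 < m) (hn : n = k * m) :
    DFT n = Lmat n k m * kron n k m 1 (DFT m) * Wmat n m * kron n k m (DFT k) 1 := by
  subst hn
  ext r c
  set q := r.val / k with hq
  set s := r.val % k with hs
  set u := c.val / m with hu
  set v := c.val % m with hv
  have hrd : k * q + s = r.val := Nat.div_add_mod r.val k
  have hcd : m * u + v = c.val := Nat.div_add_mod c.val m
  have hql : q < m := Nat.div_lt_of_lt_mul r.isLt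
  have hsl : s < k := Nat.mod_lt _ hk
  have hul : u < k := Nat.div_lt_of_lt_mul (Nat.lt_of_lt_of_eq c.isLt (Nat.mul_comm k m))
  have hvl : v < m := Nat.mod_lt _ hm
  have hx0 : s * m + q < k * m := by
    calc s * m + q < s * m + m := by omega
    _ = (s + 1) * m := by ring
    _ ≤ k * m := Nat.mul_le_mul_right m hsl
  have hy0 : s * m + v < k * m := by
    calc s * m + v < s * m + m := by omega
    _ = (s + 1) * m := by ring
    _ ≤ k * m := Nat.mul_le_mul_right m hsl
  set x0 : Fin (k*m) := ⟨s * m + q, hx0⟩ with hx0def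
  set y0 : Fin (k*m) := ⟨s * m + v, hy0⟩ with hy0def
  have hdu : ∀ a b : ℕ, b < m → (a * m + b) / m = a := by
    intro a b hb
    rw [Nat.add_comm, Nat.add_mul_div_right _ _ hm, Nat.div_eq_of_lt hb, Nat.zero_add]
  have hmu : ∀ a b : ℕ, b < m → (a * m + b) % m = b := by
    intro a b hb
    rw [Nat.add_comm, Nat.add_mul_mod_self_right, Nat.mod_eq_of_lt hb]
  -- (W * K2) as diagonal action
  have hWK : ∀ (y : Fin (k*m)),
      (Wmat (k*m) m * kron (k*m) k m (DFT k) 1) y c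
        = tw (k*m) ^ ((y.val / m) * (y.val % m)) * kron (k*m) k m (DFT k) 1 y c := by
    intro y
    rw [Matrix.mul_apply, Finset.sum_eq_single y]
    · simp [Wmat]
    · intro z _ hz
      simp [Wmat, Ne.symm hz]
    · simp
  rw [Matrix.mul_assoc, Matrix.mul_assoc, Matrix.mul_apply, Finset.sum_eq_single x0]
  rotate_left
  · intro x _ hx
    rcases eq_or_ne r.val ((x.val % m) * k + x.val / m) with h | h
    · exfalso
      apply hx
      have hxm : x.val / m < k := Nat.div_lt_of_lt_mul (lt_of_lt_of_eq x.isLt (Nat.mul_comm k m))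
      have h1 : s = x.val / m := by
        rw [hs, h, Nat.mul_comm, Nat.mul_add_mod, Nat.mod_eq_of_lt hxm]
      have h2 : q = x.val % m := by
        rw [hq, h, Nat.mul_comm, Nat.mul_add_div hk, Nat.div_eq_of_lt hxm, Nat.add_zero]
      have h3 : m * (x.val / m) + x.val % m = x.val := Nat.div_add_mod _ _
      have hx' : x.val = s * m + q := by rw [h1, h2]; exact (Nat.div_add_mod' x.val m).symm
      exact Fin.ext hx'
    · simp [Lmat, h]
  · intro h
    exact absurd (Finset.mem_univ x0) h
  have hx0m : x0.val % m = q := hmu s q hql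
  have hx0d : x0.val / m = s := hdu s q hql
  have hy0m : y0.val % m = v := hmu s v hvl
  have hy0d : y0.val / m = s := hdu s v hvl
  have hLx0 : Lmat (k*m) k m r x0 = 1 := by
    simp only [Lmat, hx0m, hx0d]
    rw [if_pos (by rw [Nat.mul_comm q k]; omega)]
  rw [hLx0, one_mul, Matrix.mul_apply, Finset.sum_eq_single y0]
  rotate_left
  · intro y _ hy
    rcases eq_or_ne (y.val / m) s with h1 | h1
    · rcases eq_or_ne (y.val % m) v with h2 | h2
      · exfalso
        apply hy
        have hy' : y.val = s * m + v := by
          rw [← h1, ← h2]; exact (Nat.div_add_mod' y.val m).symm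
        exact Fin.ext hy'
      · rw [hWK y]
        have hz : kron (k*m) k m (DFT k) 1 y c = 0 := by
          have : ment (1 : Matrix (Fin m) (Fin m) ℂ) (y.val % m) v = 0 := by
            unfold ment
            split_ifs with hcond
            · simp [Matrix.one_apply, Fin.ext_iff, h2]
            · rfl
          simp [kron]; exact Or.inr this
        rw [hz, mul_zero, mul_zero]
    · have hz : kron (k*m) k m 1 (DFT m) x0 y = 0 := by
        have : ment (1 : Matrix (Fin k) (Fin k) ℂ) s (y.val / m) = 0 := by
          unfold ment
          split_ifs with hcond
          · simp [Matrix.one_apply, Fin.ext_iff, Ne.symm h1]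
          · rfl
        simp [kron, hx0d, this]
      rw [hz, zero_mul]
  · intro h
    exact absurd (Finset.mem_univ y0) h
  rw [hWK y0, hy0m, hy0d]
  have e1 : kron (k*m) k m 1 (DFT m) x0 y0 = tw m ^ (q * v) := by
    unfold kron
    rw [hx0d, hy0d, hx0m, hy0m]
    unfold ment
    rw [dif_pos ⟨hsl, hsl⟩, dif_pos ⟨hql, hvl⟩, Matrix.one_apply_eq, one_mul]
    rfl
  have e2 : kron (k*m) k m (DFT k) 1 y0 c = tw k ^ (s * u) := by
    unfold kron
    rw [hy0d, hy0m]
    unfold ment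
    rw [dif_pos ⟨hsl, hul⟩, dif_pos ⟨hvl, hvl⟩, Matrix.one_apply_eq, mul_one]
    rfl
  rw [e1, e2]
  have harith : r.val * c.val = k*(q*v) + (s*v + (m*(s*u) + (k*m)*(u*q))) := by
    rw [← hrd, ← hcd]; ring
  show tw (k*m) ^ (r.val * c.val) = _
  rw [harith, pow_add, pow_add, pow_add,
    pow_mul (tw (k*m)) k (q*v), pow_mul (tw (k*m)) m (s*u), pow_mul (tw (k*m)) (k*m) (u*q),
    tw_pow_left k m hk hm, tw_pow_self (Nat.mul_pos hk hm), one_pow, mul_one,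
    show tw (k*m) ^ m = tw k from by rw [Nat.mul_comm]; exact tw_pow_left m k hm hk]
end

section
/- For a multi-index α with |α| = N and any M > 0, the digit-reversal permutation matrices satisfy S_{(M,α)} = (I_M ⊗ S_α) L^{NM}_N. -/
open Matrix Complex

lemma mdig_length (cs : List ℕ) (x : ℕ) : (mdig cs x).length = cs.length := by
  induction cs generalizing x with
  | nil => rfl
  | cons c cs ih => simp [mdig, ih]

lemma mdig_forall₂ (cs : List ℕ) (h : ∀ c ∈ cs, 0 < c) (x : ℕ) :
    List.Forall₂ (· < ·) (mdig cs x) cs := by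
  induction cs generalizing x with
  | nil => exact List.Forall₂.nil
  | cons c cs ih =>
    exact List.Forall₂.cons (Nat.mod_lt _ (h c (by simp)))
      (ih (fun y hy => h y (by simp [hy])) _)

lemma mval_lt {ds a : List ℕ} (h : List.Forall₂ (· < ·) ds a) : mval a ds < a.prod := by
  induction h with
  | nil => simp [mval]
  | @cons d c ds a hdc htl ih =>
    show d + c * mval a ds < c * a.prod
    calc d + c * mval a ds < c + c * mval a ds := by omega
      _ = c * (mval a ds + 1) := by ring
      _ ≤ c * a.prod := Nat.mul_le_mul_left c (Nat.succ_le_of_lt ih)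

lemma mrev_lt (a : List ℕ) (ha : ∀ x ∈ a, 0 < x) (x : ℕ) : mrev a x < a.prod := by
  apply mval_lt
  have h1 : List.Forall₂ (· < ·) (mdig a.reverse x) a.reverse :=
    mdig_forall₂ a.reverse (by simpa using ha) x
  have := List.forall₂_reverse_iff.mpr h1
  simpa using this

lemma mval_append (a : List ℕ) (ds : List ℕ) (h : ds.length = a.length) (M d : ℕ) :
    mval (a ++ [M]) (ds ++ [d]) = mval a ds + a.prod * d := by
  induction a generalizing ds with
  | nil =>
    cases ds with
    | nil => simp [mval]
    | cons e es => simp at h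
  | cons c cs ih =>
    cases ds with
    | nil => simp at h
    | cons e es =>
      simp only [List.cons_append, List.prod_cons]
      show e + c * mval (cs ++ [M]) (es ++ [d]) = (e + c * mval cs es) + c * cs.prod * d
      rw [ih es (by simpa using h)]
      ring

lemma mrev_append (a : List ℕ) (M x : ℕ) :
    mrev (a ++ [M]) x = mrev a (x / M) + a.prod * (x % M) := by
  unfold mrev
  rw [List.reverse_append]
  show mval (a ++ [M]) ((mdig (M :: a.reverse) x).reverse) = _
  rw [show mdig (M :: a.reverse) x = x % M :: mdig a.reverse (x / M) from rfl,
    List.reverse_cons]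
  exact mval_append a _ (by simp [mdig_length]) M (x % M)

/-- `S_{(M,α)} = (I_M ⊗ S_α) L^{NM}_N`, where `|α| = N`, `M > 0`,
and `(M,α)` extends the multi-index `α = (n_K,…,n_0)` by `M` on the left
(most significant side), i.e. the least-significant-first radix list becomes
`a ++ [M]`. -/
theorem digit_reversal_extend_left (a : List ℕ) (ha : ∀ x ∈ a, 0 < x)
    (M N : ℕ) (hM : 0 < M) (hN : N = a.prod) :
    Smat (N * M) (a ++ [M]) = kron (N * M) M N 1 (Smat N a) * Lmat (N * M) N M := by
  subst hN
  set N := a.prod with hNdef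
  have hN0 : 0 < N := List.prod_pos ha
  ext r c
  have hr : r.val < N * M := r.isLt
  have hc : c.val < N * M := c.isLt
  have hcM : c.val / M < N := Nat.div_lt_of_lt_mul (lt_of_lt_of_eq hc (Nat.mul_comm N M))
  have hrN : r.val / N < M := Nat.div_lt_of_lt_mul hr
  have hrm : r.val % N < N := Nat.mod_lt _ hN0
  have hcm : c.val % M < M := Nat.mod_lt _ hM
  set v := N * (c.val % M) + c.val / M with hv
  have hvlt : v < N * M := by
    calc v < N * (c.val % M) + N := by omega
      _ = N * (c.val % M + 1) := by ring
      _ ≤ N * M := Nat.mul_le_mul_left N (by omega)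
  rw [Matrix.mul_apply]
  have hLv : (c.val % M) * N + c.val / M = v := by rw [hv]; ring
  have hsum : ∑ t : Fin (N * M), kron (N * M) M N 1 (Smat N a) r t * Lmat (N * M) N M t c
      = kron (N * M) M N 1 (Smat N a) r ⟨v, hvlt⟩ := by
    rw [Finset.sum_eq_single (⟨v, hvlt⟩ : Fin (N * M))]
    · simp [Lmat, hLv]
    · intro b _ hb
      have hbv : ¬ b.val = (c.val % M) * N + c.val / M := by
        rw [hLv]; exact fun h => hb (Fin.ext h)
      simp [Lmat, hbv]
    · intro h; exact absurd (Finset.mem_univ _) h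
  rw [hsum]
  have hvd : v / N = c.val % M := by
    rw [hv, Nat.mul_add_div hN0, Nat.div_eq_of_lt hcM, Nat.add_zero]
  have hvm : v % N = c.val / M := by
    rw [hv, Nat.mul_add_mod, Nat.mod_eq_of_lt hcM]
  have hmr : mrev a (c.val / M) < N := mrev_lt a ha _
  have key : r.val = mrev a (c.val / M) + N * (c.val % M) ↔
      (r.val / N = c.val % M ∧ r.val % N = mrev a (c.val / M)) := by
    constructor
    · intro h
      constructor
      · rw [h, Nat.add_mul_div_left _ _ hN0, Nat.div_eq_of_lt hmr, Nat.zero_add]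
      · rw [h, Nat.add_mul_mod_self_left, Nat.mod_eq_of_lt hmr]
    · rintro ⟨h1, h2⟩
      conv_lhs => rw [← Nat.div_add_mod r.val N]
      rw [h1, h2]; ring
  show (if r.val = mrev (a ++ [M]) c.val then (1:ℂ) else 0)
      = ment 1 (r.val / N) ((v : ℕ) / N) * ment (Smat N a) (r.val % N) (v % N)
  rw [mrev_append, hvd, hvm]
  unfold ment
  rw [dif_pos ⟨hrN, hcm⟩, dif_pos ⟨hrm, hcM⟩]
  rw [Matrix.one_apply]
  show (if r.val = mrev a (c.val / M) + N * (c.val % M) then (1:ℂ) else 0) = _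
  simp only [key]
  unfold Smat
  by_cases h1 : r.val / N = c.val % M <;> by_cases h2 : r.val % N = mrev a (c.val / M) <;>
    simp [h1, h2, Fin.ext_iff]
end

section
/- In the DIT factorization, the permutation matrix A_k = I_{N/N_k} ⊗ L^{N_k}_{n_k} acts on indices by moving the k-th digit: if n has digit representation p = (p_K, …, p_{k+1}, p_k, p_0, p_1, …, p_{k-1}) in the system generated by β_{k-1} = (n_K, …, n_{k+1}, n_k, n_0, …, n_{k-1}), then A_k maps e_n to e_m where m has digits (p_K, …, p_{k+1}, p_0, …, p_{k-1}, p_k) in the system generated by β_k = (n_K, …, n_{k+1}, n_0, …, n_k). -/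
open Matrix Complex

lemma mval_append_s11 (c1 c2 d1 d2 : List ℕ) (h : d1.length = c1.length) :
    mval (c1 ++ c2) (d1 ++ d2) = mval c1 d1 + c1.prod * mval c2 d2 := by
  induction c1 generalizing d1 with
  | nil =>
    cases d1 with
    | nil => simp [mval]
    | cons => simp at h
  | cons c cs ih =>
    cases d1 with
    | nil => simp at h
    | cons e ds =>
      show e + c * mval (cs ++ c2) (ds ++ d2) = _
      rw [ih ds (by simpa using h)]
      simp only [mval, List.prod_cons]
      ring

lemma mval_lt_s11 {c d : List ℕ} (h : List.Forall₂ (· < ·) d c) : mval c d < c.prod := by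
  induction h with
  | nil => simp [mval]
  | @cons x y l1 l2 hxy _ ih =>
    simp only [mval, List.prod_cons]
    have h2 : y * (mval l2 l1 + 1) ≤ y * l2.prod := Nat.mul_le_mul_left _ ih
    rw [Nat.mul_add, Nat.mul_one] at h2
    linarith

/-- the permutation `A_k = I_{N/N_k} ⊗ L^{N_k}_{n_k}` acts on
indices by moving the `k`-th digit: it maps the basis vector indexed by the
number with digits `(p_K,…,p_{k+1},p_k,p_0,…,p_{k-1})` in the system generated
by `β_{k-1} = (n_K,…,n_{k+1},n_k,n_0,…,n_{k-1})` to the basis vector indexed by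
the number with digits `(p_K,…,p_{k+1},p_0,…,p_{k-1},p_k)` in the system
generated by `β_k = (n_K,…,n_{k+1},n_0,…,n_k)`.
Here `a = [n_0,…,n_K]` and `d = [p_0,…,p_K]` (least significant first). -/
theorem dit_stage_permutation (a d : List ℕ) (ha : ∀ x ∈ a, 0 < x)
    (hd : List.Forall₂ (· < ·) d a)
    (k : ℕ) (hk1 : 1 ≤ k) (hkK : k < a.length)
    (N : ℕ) (hN : N = a.prod) :
    ∀ (cI rI : Fin N),
      cI.val = mval ((a.take k).reverse ++ a.getD k 1 :: a.drop (k + 1))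
                    ((d.take k).reverse ++ d.getD k 0 :: d.drop (k + 1)) →
      rI.val = mval (a.getD k 1 :: (a.take k).reverse ++ a.drop (k + 1))
                    (d.getD k 0 :: (d.take k).reverse ++ d.drop (k + 1)) →
      (kron N (N / (a.take (k + 1)).prod) ((a.take (k + 1)).prod) 1
          (Lmat ((a.take (k + 1)).prod) (a.getD k 1)
            ((a.take (k + 1)).prod / a.getD k 1))) *ᵥ
        Pi.single cI 1 = Pi.single rI 1 := by
  intro cI rI hc hr
  classical
  have hlen : d.length = a.length := hd.length_eq
  set ak := a.getD k 1 with hak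
  set dk := d.getD k 0 with hdk
  set P := (a.take k).prod with hP
  set Nk := (a.take (k+1)).prod with hNk
  set Q := (a.drop (k+1)).prod with hQ
  set v := mval (a.take k).reverse (d.take k).reverse with hv
  set R := mval (a.drop (k+1)) (d.drop (k+1)) with hR
  have hgetD : ak = a[k] := by rw [hak]; exact List.getD_eq_getElem a 1 hkK
  have hakpos : 0 < ak := by rw [hgetD]; exact ha _ (List.getElem_mem hkK)
  have hPpos : 0 < P := List.prod_pos (fun x hx => ha x (List.mem_of_mem_take hx))
  have hQpos : 0 < Q := List.prod_pos (fun x hx => ha x (List.mem_of_mem_drop hx))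
  have htk : a.take (k+1) = a.take k ++ [a[k]] := by
    rw [List.take_succ, List.getElem?_eq_getElem hkK]; rfl
  have hNkPak : Nk = P * ak := by
    rw [hNk, htk, List.prod_append, List.prod_singleton, hgetD]
  have hNkpos : 0 < Nk := by rw [hNkPak]; exact Nat.mul_pos hPpos hakpos
  have hNQ : N = Nk * Q := by
    calc N = a.prod := hN
    _ = ((a.take (k+1)) ++ a.drop (k+1)).prod := by rw [List.take_append_drop]
    _ = Nk * Q := by rw [List.prod_append]
  have hvP : v < P := by
    have := mval_lt_s11 (List.forall₂_reverse_iff.2 (List.forall₂_take k hd))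
    rwa [List.prod_reverse] at this
  have hdkak : dk < ak := by
    have hkd : k < d.length := by omega
    have := (List.forall₂_iff_get.1 hd).2 k hkd hkK
    simp only [List.get_eq_getElem] at this
    rw [hdk, hgetD, List.getD_eq_getElem d 0 hkd]
    exact this
  have hRQ : R < Q := mval_lt_s11 (List.forall₂_drop (k+1) hd)
  have hlen1 : ((d.take k).reverse).length = ((a.take k).reverse).length := by
    simp [List.length_take, hlen]
  have hc' : (cI : ℕ) = (v + P * dk) + Nk * R := by
    rw [hc, mval_append_s11 _ _ _ _ hlen1]
    simp only [mval, List.prod_reverse]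
    rw [hNkPak]; ring
  have hr' : (rI : ℕ) = (dk + ak * v) + Nk * R := by
    rw [hr]
    show dk + ak * mval ((a.take k).reverse ++ a.drop (k+1))
        ((d.take k).reverse ++ d.drop (k+1)) = _
    rw [mval_append_s11 _ _ _ _ hlen1, List.prod_reverse, hNkPak]
    ring
  have hu1 : v + P * dk < Nk := by
    have h2 : P * (dk + 1) ≤ P * ak := Nat.mul_le_mul_left _ hdkak
    rw [Nat.mul_add, Nat.mul_one] at h2
    rw [hNkPak]; linarith
  have hu2 : dk + ak * v < Nk := by
    have h2 : ak * (v + 1) ≤ ak * P := Nat.mul_le_mul_left _ hvP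
    rw [Nat.mul_add, Nat.mul_one] at h2
    rw [hNkPak, Nat.mul_comm]; linarith
  have hcdiv : (cI : ℕ) / Nk = R := by
    rw [hc', Nat.add_mul_div_left _ _ hNkpos, Nat.div_eq_of_lt hu1, Nat.zero_add]
  have hcmod : (cI : ℕ) % Nk = v + P * dk := by
    rw [hc', Nat.add_mul_mod_self_left, Nat.mod_eq_of_lt hu1]
  have hrdiv : (rI : ℕ) / Nk = R := by
    rw [hr', Nat.add_mul_div_left _ _ hNkpos, Nat.div_eq_of_lt hu2, Nat.zero_add]
  have hrmod : (rI : ℕ) % Nk = dk + ak * v := by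
    rw [hr', Nat.add_mul_mod_self_left, Nat.mod_eq_of_lt hu2]
  have hmP : Nk / ak = P := by rw [hNkPak, Nat.mul_div_cancel _ hakpos]
  have hNQdiv : N / Nk = Q := by rw [hNQ, Nat.mul_div_cancel_left _ hNkpos]
  have hm1 : (v + P * dk) % P = v := by
    rw [Nat.add_mul_mod_self_left, Nat.mod_eq_of_lt hvP]
  have hm2 : (v + P * dk) / P = dk := by
    rw [Nat.add_mul_div_left _ _ hPpos, Nat.div_eq_of_lt hvP, Nat.zero_add]
  funext x
  have hb1 : (x : ℕ) / Nk < N / Nk := by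
    rw [hNQdiv, Nat.div_lt_iff_lt_mul hNkpos]
    calc (x : ℕ) < N := x.isLt
    _ = Q * Nk := by rw [hNQ]; ring
  have hb2 : (cI : ℕ) / Nk < N / Nk := by rw [hcdiv, hNQdiv]; exact hRQ
  simp only [Matrix.mulVec_single_one, Matrix.col_apply, mul_one, Pi.single_apply]
  simp only [kron, ment]
  rw [dif_pos ⟨hb1, hb2⟩, dif_pos ⟨Nat.mod_lt _ hNkpos, Nat.mod_lt _ hNkpos⟩]
  simp only [Lmat, Matrix.one_apply, Fin.mk.injEq]
  simp only [hcdiv, hcmod, hmP, hm1, hm2]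
  have key : x = rI ↔ ((x : ℕ) / Nk = R ∧ (x : ℕ) % Nk = v * ak + dk) := by
    constructor
    · rintro rfl
      exact ⟨hrdiv, by rw [hrmod]; ring⟩
    · rintro ⟨h1, h2⟩
      apply Fin.ext
      have e1 := Nat.mod_add_div (x : ℕ) Nk
      have e2 := Nat.mod_add_div (rI : ℕ) Nk
      rw [h1, h2] at e1
      rw [hrmod, hrdiv] at e2
      have hcomm : v * ak = ak * v := Nat.mul_comm _ _
      linarith
  by_cases h1 : (x : ℕ) / Nk = R <;> by_cases h2 : (x : ℕ) % Nk = v * ak + dk <;>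
    simp [h1, h2, key]
end
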